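/- Let P ⊆ ℝ^n be a nonempty compact set, I ⊆ {1,…,n}, and Q ⊆ ℝ^n a finite set such that sup_{x∈P} f(x) = sup_{x∈Q} f(x) for every function f : ℝ^n → ℝ that is convex in x_I. Then the projections of P and Q onto the coordinates outside I coincide: { x_{N∖I} : x ∈ P } = { x_{N∖I} : x ∈ Q }, where N = {1,…,n} and x_{N∖I} denotes the vector of coordinates x_i for i ∉ I. In particular, the projection of P onto the coordinates outside I is a finite set. -/
import Mathlib


open Set

/-- `f : ℝⁿ → ℝ` is *convex in the coordinates `I`*: for every fixed assignment `xb` of the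
coordinates outside `I`, the restriction of `f` to the corresponding affine slice is convex. -/
def ConvexIn {n : ℕ} (I : Set (Fin n)) (f : (Fin n → ℝ) → ℝ) : Prop :=
  ∀ xb : Fin n → ℝ, ConvexOn ℝ {x : Fin n → ℝ | ∀ i ∉ I, x i = xb i} f

lemma convexIn_comp {n : ℕ} (I : Set (Fin n)) (g : ({i : Fin n // i ∉ I} → ℝ) → ℝ) :
    ConvexIn I (fun x => g (fun i => x i.1)) := by
  intro xb
  constructor
  · intro x hx y hy a b ha hb hab i hi
    have := hx i hi
    have := hy i hi
    simp only [Pi.add_apply, Pi.smul_apply, smul_eq_mul] at *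
    rw [hx i hi, hy i hi, ← add_mul, hab, one_mul]
  · intro x hx y hy a b ha hb hab
    have hx' : (fun i : {i : Fin n // i ∉ I} => x i.1) = fun i => xb i.1 := by
      funext i; exact hx i.1 i.2
    have hy' : (fun i : {i : Fin n // i ∉ I} => y i.1) = fun i => xb i.1 := by
      funext i; exact hy i.1 i.2
    have hz' : (fun i : {i : Fin n // i ∉ I} => (a • x + b • y) i.1) = fun i => xb i.1 := by
      funext i
      simp only [Pi.add_apply, Pi.smul_apply, smul_eq_mul]
      rw [hx i.1 i.2, hy i.1 i.2, ← add_mul, hab, one_mul]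
    simp only [hx', hy', hz', smul_eq_mul]
    rw [← add_mul, hab, one_mul]

theorem stmt_5 {n : ℕ} (P : Set (Fin n → ℝ)) (hPne : P.Nonempty) (hPcomp : IsCompact P)
    (I : Set (Fin n)) (Q : Set (Fin n → ℝ)) (hQfin : Q.Finite)
    (hsup : ∀ f : (Fin n → ℝ) → ℝ, ConvexIn I f → sSup (f '' P) = sSup (f '' Q)) :
    (fun (x : Fin n → ℝ) (i : {i : Fin n // i ∉ I}) => x i.1) '' P
      = (fun (x : Fin n → ℝ) (i : {i : Fin n // i ∉ I}) => x i.1) '' Q ∧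
    ((fun (x : Fin n → ℝ) (i : {i : Fin n // i ∉ I}) => x i.1) '' P).Finite := by
  classical
  set π : (Fin n → ℝ) → ({i : Fin n // i ∉ I} → ℝ) := fun x i => x i.1 with hπ
  -- Q is nonempty
  have hQne : Q.Nonempty := by
    by_contra h
    rw [not_nonempty_iff_eq_empty] at h
    subst h
    have h1 := hsup (fun _ => (1:ℝ)) (convexIn_comp I (fun _ => (1:ℝ)))
    rw [hPne.image_const, image_empty, Real.sSup_empty, csSup_singleton] at h1
    norm_num at h1
  -- for a fixed point a, the function -dist (π x) a
  have key : ∀ (S : Set (Fin n → ℝ)) (a : {i : Fin n // i ∉ I} → ℝ),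
      sSup ((fun x => -dist (π x) a) '' S) ∈ (fun x => -dist (π x) a) '' S →
      (a ∈ π '' S ↔ sSup ((fun x => -dist (π x) a) '' S) = 0) := by
    intro S a hmem
    constructor
    · rintro ⟨x, hxS, hxa⟩
      apply le_antisymm
      · apply Real.sSup_le _ le_rfl
        rintro y ⟨z, _, rfl⟩
        simp [neg_nonpos, dist_nonneg]
      · apply le_csSup
        · exact ⟨0, by rintro y ⟨z, _, rfl⟩; simp [neg_nonpos, dist_nonneg]⟩
        · exact ⟨x, hxS, by simp [hxa]⟩
    · intro h
      obtain ⟨x, hxS, hxa⟩ := hmem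
      rw [h] at hxa
      refine ⟨x, hxS, ?_⟩
      simp only [neg_eq_zero] at hxa
      have : dist (π x) a = 0 := hxa
      exact dist_eq_zero.mp this
  have hcont : ∀ a : {i : Fin n // i ∉ I} → ℝ, Continuous (fun x => -dist (π x) a) := by
    intro a
    have hπc : Continuous π := continuous_pi fun i => continuous_apply i.1
    exact (hπc.dist continuous_const).neg
  have heq : π '' P = π '' Q := by
    ext a
    have hP : sSup ((fun x => -dist (π x) a) '' P) ∈ (fun x => -dist (π x) a) '' P :=
      (hPcomp.image (hcont a)).sSup_mem (hPne.image _)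
    have hQ : sSup ((fun x => -dist (π x) a) '' Q) ∈ (fun x => -dist (π x) a) '' Q :=
      (hQne.image _).csSup_mem (hQfin.image _)
    rw [key P a hP, key Q a hQ,
      hsup (fun x => -dist (π x) a) (convexIn_comp I (fun y => -dist y a))]
  exact ⟨heq, heq ▸ hQfin.image π⟩
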